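/- Let G be a finite (additive) abelian group, n ≥ 1, and fix x = (x_1, …, x_n) ∈ G^n. Let r_2, …, r_n be independent, uniformly distributed random elements of G, and define the output shares y_1 := x_1 + (r_2 + ⋯ + r_n) and y_i := x_i − r_i for 2 ≤ i ≤ n. Then the random vector (y_1, …, y_n) is uniformly distributed on the coset {y ∈ G^n : y_1 + ⋯ + y_n = x_1 + ⋯ + x_n}. (Output distribution of the Refresh gadget: it preserves the shared value and its output sharing is uniform among all sharings of that value.) -/

import Mathlib

theorem stmt_11 (G : Type) [AddCommGroup G] [Fintype G] [DecidableEq G]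
    (n : ℕ) (hn : 1 ≤ n) (x : Fin n → G) :
    PMF.map
      (fun r : Fin (n - 1) → G => fun i : Fin n =>
        if h : (i : ℕ) = 0 then x i + ∑ j, r j
        else x i - r ⟨(i : ℕ) - 1, by have := i.isLt; omega⟩)
      (PMF.uniformOfFintype (Fin (n - 1) → G))
    = PMF.uniformOfFinset
        (Finset.univ.filter (fun y : Fin n → G => ∑ i, y i = ∑ i, x i))
        ⟨x, by simp⟩ := by
  obtain ⟨m, rfl⟩ : ∃ m, n = m + 1 := ⟨n - 1, by omega⟩
  set f : (Fin (m + 1 - 1) → G) → (Fin (m + 1) → G) := fun r i =>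
    if h : (i : ℕ) = 0 then x i + ∑ j, r j
    else x i - r ⟨(i : ℕ) - 1, by have := i.isLt; omega⟩ with hf
  have hrsum : ∀ r : Fin (m + 1 - 1) → G, ∑ j, r j = ∑ j : Fin m, r j := fun r => rfl
  have hzero : ∀ r, f r 0 = x 0 + ∑ j : Fin m, r j := fun r => dif_pos rfl
  have hsucc : ∀ r (j : Fin m), f r j.succ = x j.succ - r j := by
    intro r j
    have h1 : f r j.succ
        = x j.succ - r ⟨(j.succ : ℕ) - 1,
            by have := j.isLt; simp only [Fin.val_succ]; omega⟩ :=
      dif_neg (by simp)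
    rw [h1]
    congr 1
  have hsum : ∀ r, ∑ i, f r i = ∑ i, x i := by
    intro r
    rw [Fin.sum_univ_succ, Fin.sum_univ_succ (fun i => x i), hzero]
    simp only [hsucc]
    rw [Finset.sum_sub_distrib]
    abel
  have hinj : Function.Injective f := by
    intro r r' h
    funext j
    have := congrFun h j.succ
    rw [hsucc, hsucc] at this
    exact (sub_right_injective this)
  have hsurj : ∀ y : Fin (m + 1) → G, ∑ i, y i = ∑ i, x i → ∃ r, f r = y := by
    intro y hy
    refine ⟨fun j => x j.succ - y j.succ, ?_⟩
    funext i
    induction i using Fin.cases with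
    | zero =>
      rw [hzero]
      rw [Fin.sum_univ_succ, Fin.sum_univ_succ (fun i => x i)] at hy
      rw [Finset.sum_sub_distrib]
      have h0 : y 0 = x 0 + ∑ i : Fin m, x i.succ - ∑ i : Fin m, y i.succ := by
        rw [← hy]; abel
      rw [h0]; abel
    | succ j =>
      rw [hsucc]; abel
  set s := Finset.univ.filter (fun y : Fin (m + 1) → G => ∑ i, y i = ∑ i, x i) with hs
  have himg : ∀ r, f r ∈ s := by
    intro r; simp [hs, hsum r]
  have hcard : s.card = Fintype.card (Fin (m + 1 - 1) → G) := by
    have : s = Finset.univ.image f := by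
      ext y
      simp only [Finset.mem_image, Finset.mem_univ, true_and, hs, Finset.mem_filter]
      constructor
      · intro hy
        exact hsurj y hy
      · rintro ⟨r, hr⟩
        rw [← hr]; exact hsum r
    rw [this, Finset.card_image_of_injective _ hinj, Finset.card_univ]
  ext y
  rw [PMF.map_apply]
  erw [PMF.uniformOfFinset_apply]
  by_cases hy : y ∈ s
  · obtain ⟨r₀, hr₀⟩ := hsurj y (by simpa [hs] using hy)
    rw [if_pos hy, hcard]
    rw [tsum_eq_single r₀ (by
      intro r hr
      rw [if_neg (fun h => hr (hinj (h.symm.trans hr₀.symm)))])]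
    rw [if_pos hr₀.symm, PMF.uniformOfFintype_apply]
  · rw [if_neg hy]
    refine Summable.tsum_eq_zero_iff (by exact ENNReal.summable) |>.2 ?_
    intro r
    rw [if_neg (fun h => hy (by rw [h]; exact himg r))]
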